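/- Let ε_n > 0 and μ_n ∈ (0,1] be such that the probability under (X^n, Y^n) ~ Q_{X^n} Q_{Y^n|X^n} that (X^n, Y^n) ∉ 𝒜_{ε_n} is at most μ_n, and suppose R_n − I(X;Y) − ε_n = (c − r)(log₂ n)/n with c > r > 0. Let S̄ be the set of codebooks C of size 2^{n R_n} such that Σ_{y^n} P_{C,2}(y^n) < μ_n(1 + 1/√n) and D_{C,1}(y^n) < 1 + 1/√n for every y^n ∈ 𝒴^n. Then the probability over the random i.i.d. codebook 𝒞 that 𝒞 ∉ S̄ is at most e^{−(μ_n/(3n)) 2^{n R_n}} + |𝒴|^n e^{−(1/3) n^{c − r − 1}}. -/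

import Mathlib

open Finset Real
open scoped BigOperators Classical

noncomputable section SoftCovering

/-- `p` is a probability mass function on the finite type `α`. -/
def IsPMF {α : Type*} [Fintype α] (p : α → ℝ) : Prop :=
  (∀ a, 0 ≤ p a) ∧ ∑ a, p a = 1

variable {𝒳 𝒴 : Type*} [Fintype 𝒳] [Fintype 𝒴]

/-- The output distribution `Q_Y` on `𝒴` induced by the input distribution `Q_X`
and the channel `Q_{Y|X}`. -/
def outDist (QX : 𝒳 → ℝ) (QYX : 𝒳 → 𝒴 → ℝ) (y : 𝒴) : ℝ := ∑ x, QX x * QYX x y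

/-- The `n`-fold i.i.d. product of a distribution `p`. -/
def prodDist {α : Type*} [Fintype α] (p : α → ℝ) (n : ℕ) (xs : Fin n → α) : ℝ :=
  ∏ i, p (xs i)

/-- The `n`-fold memoryless channel: `Q_{Y^n|X^n = xs}(ys)`. -/
def chanProd (QYX : 𝒳 → 𝒴 → ℝ) (n : ℕ) (xs : Fin n → 𝒳) (ys : Fin n → 𝒴) : ℝ :=
  ∏ i, QYX (xs i) (ys i)

/-- The information density `ı_{X;Y}(x;y) = log₂ (Q_{Y|X}(y|x) / Q_Y(y))`, in bits. -/
def infoDensity (QX : 𝒳 → ℝ) (QYX : 𝒳 → 𝒴 → ℝ) (x : 𝒳) (y : 𝒴) : ℝ :=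
  Real.logb 2 (QYX x y / outDist QX QYX y)

/-- The mutual information `I(X;Y)` of `(X,Y) ~ Q_X Q_{Y|X}`, in bits. -/
def mutualInfo (QX : 𝒳 → ℝ) (QYX : 𝒳 → 𝒴 → ℝ) : ℝ :=
  ∑ x, ∑ y, QX x * QYX x y * infoDensity QX QYX x y

/-- The variance `V` of the information density under `(X,Y) ~ Q_X Q_{Y|X}`. -/
def infoVar (QX : 𝒳 → ℝ) (QYX : 𝒳 → 𝒴 → ℝ) : ℝ :=
  ∑ x, ∑ y, QX x * QYX x y * (infoDensity QX QYX x y - mutualInfo QX QYX) ^ 2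

/-- The centered third absolute moment `ρ` of the information density. -/
def infoThird (QX : 𝒳 → ℝ) (QYX : 𝒳 → 𝒴 → ℝ) : ℝ :=
  ∑ x, ∑ y, QX x * QYX x y * |infoDensity QX QYX x y - mutualInfo QX QYX| ^ 3

/-- The Rényi divergence of order `a` between `Q_{X,Y} = Q_X Q_{Y|X}` and the product
of its marginals `Q_X Q_Y`, in bits. -/
def renyiDiv (QX : 𝒳 → ℝ) (QYX : 𝒳 → 𝒴 → ℝ) (a : ℝ) : ℝ :=
  (a - 1)⁻¹ * Real.logb 2 (∑ x, ∑ y,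
    (QX x * QYX x y) ^ a * (QX x * outDist QX QYX y) ^ (1 - a))

/-- Membership in the jointly typical set
`𝒜_ε = {(x^n,y^n) : (1/n) log₂ (Q_{Y^n|X^n=x^n}(y^n)/Q_{Y^n}(y^n)) ≤ I(X;Y) + ε}`. -/
def JTypical (QX : 𝒳 → ℝ) (QYX : 𝒳 → 𝒴 → ℝ) (n : ℕ) (ε : ℝ)
    (xs : Fin n → 𝒳) (ys : Fin n → 𝒴) : Prop :=
  (n : ℝ)⁻¹ * Real.logb 2 (chanProd QYX n xs ys / prodDist (outDist QX QYX) n ys)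
    ≤ mutualInfo QX QYX + ε

/-- The probability that `(X^n, Y^n) ~ Q_{X^n} Q_{Y^n|X^n}` is outside `𝒜_ε`. -/
def atypProb (QX : 𝒳 → ℝ) (QYX : 𝒳 → 𝒴 → ℝ) (n : ℕ) (ε : ℝ) : ℝ :=
  ∑ xs : Fin n → 𝒳, ∑ ys : Fin n → 𝒴,
    if ¬ JTypical QX QYX n ε xs ys then prodDist QX n xs * chanProd QYX n xs ys else 0

/-- The induced output distribution `P_{Y^n|C} = 2^{-nR} ∑_m Q_{Y^n|X^n = x^n(m)}`
of a codebook `C` of size `M = 2^{nR}` (so `2^{-nR} = 1/M`). -/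
def inducedDist (QYX : 𝒳 → 𝒴 → ℝ) (n M : ℕ) (C : Fin M → Fin n → 𝒳)
    (ys : Fin n → 𝒴) : ℝ :=
  (M : ℝ)⁻¹ * ∑ m, chanProd QYX n (C m) ys

/-- The typical part `P_{C,1}(y^n) = 2^{-nR} ∑_m Q_{Y^n|X^n=x^n(m)}(y^n) 1{(x^n(m),y^n) ∈ 𝒜_ε}`. -/
def Ptyp (QX : 𝒳 → ℝ) (QYX : 𝒳 → 𝒴 → ℝ) (n M : ℕ) (ε : ℝ)
    (C : Fin M → Fin n → 𝒳) (ys : Fin n → 𝒴) : ℝ :=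
  (M : ℝ)⁻¹ * ∑ m, if JTypical QX QYX n ε (C m) ys then chanProd QYX n (C m) ys else 0

/-- The atypical part `P_{C,2}(y^n) = 2^{-nR} ∑_m Q_{Y^n|X^n=x^n(m)}(y^n) 1{(x^n(m),y^n) ∉ 𝒜_ε}`. -/
def Patyp (QX : 𝒳 → ℝ) (QYX : 𝒳 → 𝒴 → ℝ) (n M : ℕ) (ε : ℝ)
    (C : Fin M → Fin n → 𝒳) (ys : Fin n → 𝒴) : ℝ :=
  (M : ℝ)⁻¹ * ∑ m, if ¬ JTypical QX QYX n ε (C m) ys then chanProd QYX n (C m) ys else 0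

/-- The density `D_{C,1}(y^n) = P_{C,1}(y^n)/Q_{Y^n}(y^n)
= 2^{-nR} ∑_m (Q_{Y^n|X^n=x^n(m)}(y^n)/Q_{Y^n}(y^n)) 1{(x^n(m),y^n) ∈ 𝒜_ε}`. -/
def Dtyp (QX : 𝒳 → ℝ) (QYX : 𝒳 → 𝒴 → ℝ) (n M : ℕ) (ε : ℝ)
    (C : Fin M → Fin n → 𝒳) (ys : Fin n → 𝒴) : ℝ :=
  (M : ℝ)⁻¹ * ∑ m, if JTypical QX QYX n ε (C m) ys then
    chanProd QYX n (C m) ys / prodDist (outDist QX QYX) n ys else 0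

/-- Total variation distance `(1/2) ∑_y |P y - Q y|` on a finite type. -/
def tvDist {β : Type*} [Fintype β] (P Q : β → ℝ) : ℝ := (1 / 2) * ∑ y, |P y - Q y|

/-- Probability of an event `E` over the random codebook of `M` codewords drawn
i.i.d. from `Q_{X^n}`. -/
def cbProb (QX : 𝒳 → ℝ) (n M : ℕ) (E : (Fin M → Fin n → 𝒳) → Prop) : ℝ :=
  ∑ C : Fin M → Fin n → 𝒳, if E C then ∏ m, prodDist QX n (C m) else 0

/-- `𝒬(x)`: one minus the standard normal cumulative distribution function. -/
def gaussQ (x : ℝ) : ℝ :=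
  (Real.sqrt (2 * Real.pi))⁻¹ * ∫ t in Set.Ioi x, Real.exp (-(t ^ 2 / 2))

/-- `𝒬⁻¹`, the inverse of `𝒬`. -/
def gaussQInv : ℝ → ℝ := Function.invFun gaussQ


private lemma sum_pi_prod {n : ℕ} {β : Type*} [Fintype β] (g : Fin n → β → ℝ) :
    ∑ C : Fin n → β, ∏ i, g i (C i) = ∏ i, ∑ b, g i b := by
  classical
  rw [Finset.prod_univ_sum, Fintype.piFinset_univ]

private lemma sum_fun_prod {β : Type*} [Fintype β] (M : ℕ) (g : β → ℝ) :
    ∑ C : Fin M → β, ∏ m, g (C m) = (∑ b, g b) ^ M := by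
  rw [sum_pi_prod (fun _ x => g x), Finset.prod_const, Finset.card_univ, Fintype.card_fin]

private lemma log_lb {δ : ℝ} (h0 : 0 ≤ δ) (h1 : δ ≤ 1) :
    δ * Real.log 2 ≤ Real.log (1 + δ) := by
  have hc : ConcaveOn ℝ (Set.Ioi (0:ℝ)) Real.log := strictConcaveOn_log_Ioi.concaveOn
  have h := hc.2 (Set.mem_Ioi.mpr one_pos) (Set.mem_Ioi.mpr two_pos)
      (by linarith : (0:ℝ) ≤ 1 - δ) h0 (by ring)
  simp only [smul_eq_mul, Real.log_one, mul_zero, mul_one] at h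
  have he : 1 - δ + δ * 2 = 1 + δ := by ring
  rw [he] at h
  linarith

private lemma phi_ineq {δ : ℝ} (h0 : 0 ≤ δ) (h1 : δ ≤ 1) :
    δ + δ^2/3 ≤ (1+δ) * Real.log (1+δ) := by
  set F : ℝ → ℝ := fun x => (1+x) * Real.log (1+x) - x - x^2/3 with hF
  have hd : ∀ x : ℝ, 0 < 1 + x → HasDerivAt F (Real.log (1+x) - 2*x/3) x := by
    intro x hx
    have h1' : HasDerivAt (fun y : ℝ => 1 + y) 1 x := (hasDerivAt_id x).const_add 1
    have h2 : HasDerivAt (fun y : ℝ => Real.log (1+y)) ((1+x)⁻¹ * 1) x :=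
      (Real.hasDerivAt_log hx.ne').comp x h1'
    have h3 : HasDerivAt (fun y : ℝ => (1+y) * Real.log (1+y))
        (1 * Real.log (1+x) + (1+x) * ((1+x)⁻¹ * 1)) x := h1'.mul h2
    have h4 : HasDerivAt (fun y : ℝ => y) 1 x := hasDerivAt_id x
    have h5 : HasDerivAt (fun y : ℝ => y^2/3) (2*x/3) x := by
      have := (hasDerivAt_pow 2 x).div_const 3
      simpa using this
    have := (h3.sub h4).sub h5
    refine this.congr_deriv ?_
    simp only [one_mul, mul_one, mul_inv_cancel₀ hx.ne']
    ring
  have hmono : MonotoneOn F (Set.Icc (0:ℝ) 1) := by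
    apply monotoneOn_of_deriv_nonneg (convex_Icc 0 1)
    · intro x hx
      exact ((hd x (by linarith [hx.1] : (0:ℝ) < 1 + x)).differentiableAt).continuousAt.continuousWithinAt
    · intro x hx
      rw [interior_Icc] at hx
      exact ((hd x (by linarith [hx.1])).differentiableAt).differentiableWithinAt
    · intro x hx
      rw [interior_Icc] at hx
      rw [(hd x (by linarith [hx.1])).deriv]
      have := log_lb hx.1.le hx.2.le
      have hl2 := Real.log_two_gt_d9
      nlinarith [hx.1.le]
  have h00 : F 0 = 0 := by simp [hF]
  have := hmono (Set.left_mem_Icc.mpr zero_le_one) (Set.mem_Icc.mpr ⟨h0, h1⟩) h0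
  rw [h00] at this
  simp only [hF] at this
  linarith

private lemma exp_interp {f : ℝ} (h0 : 0 ≤ f) (h1 : f ≤ 1) (t : ℝ) :
    Real.exp (t * f) ≤ 1 + (Real.exp t - 1) * f := by
  have h := convexOn_exp.2 (Set.mem_univ (0:ℝ)) (Set.mem_univ t)
      (by linarith : (0:ℝ) ≤ 1 - f) h0 (by ring)
  simp only [smul_eq_mul, mul_zero, zero_add, Real.exp_zero, mul_one] at h
  calc Real.exp (t*f) = Real.exp (f*t) := by rw [mul_comm]
    _ ≤ (1-f) + f * Real.exp t := h
    _ = 1 + (Real.exp t - 1) * f := by ring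

private lemma chernoff {α : Type*} [Fintype α] (P : α → ℝ)
    (hP0 : ∀ a, 0 ≤ P a) (hP1 : ∑ a, P a = 1)
    (M : ℕ) (f : α → ℝ) (hf0 : ∀ a, 0 ≤ f a) (hf1 : ∀ a, f a ≤ 1)
    (μ : ℝ) (hμ0 : 0 < μ) (hE : ∑ a, P a * f a ≤ μ)
    (δ : ℝ) (hδ0 : 0 < δ) (hδ1 : δ ≤ 1) :
    (∑ C : Fin M → α, if (1+δ)*μ*M ≤ ∑ m, f (C m) then ∏ m, P (C m) else 0)
      ≤ Real.exp (-(δ^2*μ*M/3)) := by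
  classical
  set s : ℝ := (1+δ)*μ*M with hs
  set t : ℝ := Real.log (1+δ) with htdef
  have h1δ : (0:ℝ) < 1 + δ := by linarith
  have ht0 : 0 < t := Real.log_pos (by linarith)
  have het : Real.exp t = 1 + δ := Real.exp_log h1δ
  have step1 : (∑ C : Fin M → α, if s ≤ ∑ m, f (C m) then ∏ m, P (C m) else 0)
      ≤ ∑ C : Fin M → α, Real.exp (-(t*s)) * ∏ m, (P (C m) * Real.exp (t * f (C m))) := by
    apply Finset.sum_le_sum
    intro C _
    have hprod0 : 0 ≤ ∏ m, P (C m) := Finset.prod_nonneg fun m _ => hP0 _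
    have hre : ∏ m, (P (C m) * Real.exp (t * f (C m)))
        = (∏ m, P (C m)) * Real.exp (t * ∑ m, f (C m)) := by
      rw [Finset.prod_mul_distrib, ← Real.exp_sum]
      congr 2
      rw [Finset.mul_sum]
    by_cases h : s ≤ ∑ m, f (C m)
    · rw [if_pos h, hre]
      have h1 : 1 ≤ Real.exp (-(t*s)) * Real.exp (t * ∑ m, f (C m)) := by
        rw [← Real.exp_add]
        apply Real.one_le_exp
        nlinarith [ht0.le]
      calc ∏ m, P (C m) = (∏ m, P (C m)) * 1 := by ring
        _ ≤ (∏ m, P (C m)) * (Real.exp (-(t*s)) * Real.exp (t * ∑ m, f (C m))) :=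
            mul_le_mul_of_nonneg_left h1 hprod0
        _ = Real.exp (-(t*s)) * ((∏ m, P (C m)) * Real.exp (t * ∑ m, f (C m))) := by ring
    · rw [if_neg h]
      exact mul_nonneg (Real.exp_pos _).le
        (Finset.prod_nonneg fun m _ => mul_nonneg (hP0 _) (Real.exp_pos _).le)
  have step2 : ∑ C : Fin M → α, Real.exp (-(t*s)) * ∏ m, (P (C m) * Real.exp (t * f (C m)))
      = Real.exp (-(t*s)) * (∑ a, P a * Real.exp (t * f a)) ^ M := by
    rw [← Finset.mul_sum, sum_fun_prod M (fun a => P a * Real.exp (t * f a))]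
  have hbase0 : 0 ≤ ∑ a, P a * Real.exp (t * f a) :=
    Finset.sum_nonneg fun a _ => mul_nonneg (hP0 a) (Real.exp_pos _).le
  have hbase : ∑ a, P a * Real.exp (t * f a) ≤ Real.exp (δ*μ) := by
    have hh1 : ∑ a, P a * Real.exp (t * f a) ≤ ∑ a, P a * (1 + δ * f a) := by
      apply Finset.sum_le_sum
      intro a _
      apply mul_le_mul_of_nonneg_left _ (hP0 a)
      have h := exp_interp (hf0 a) (hf1 a) t
      rw [het] at h
      have : (1 + δ - 1) * f a = δ * f a := by ring
      rw [this] at h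
      linarith
    have hh2 : ∑ a, P a * (1 + δ * f a) = (∑ a, P a) + δ * ∑ a, P a * f a := by
      rw [Finset.mul_sum, ← Finset.sum_add_distrib]
      apply Finset.sum_congr rfl
      intro a _
      ring
    have hh3 : (∑ a, P a) + δ * ∑ a, P a * f a ≤ 1 + δ * μ := by
      rw [hP1]
      have := mul_le_mul_of_nonneg_left hE hδ0.le
      linarith
    have hh4 : 1 + δ * μ ≤ Real.exp (δ * μ) := by
      have := Real.add_one_le_exp (δ * μ)
      linarith
    calc ∑ a, P a * Real.exp (t * f a) ≤ ∑ a, P a * (1 + δ * f a) := hh1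
      _ = (∑ a, P a) + δ * ∑ a, P a * f a := hh2
      _ ≤ 1 + δ * μ := hh3
      _ ≤ Real.exp (δ * μ) := hh4
  have step3 : Real.exp (-(t*s)) * (∑ a, P a * Real.exp (t * f a)) ^ M
      ≤ Real.exp (-(t*s)) * Real.exp (δ*μ) ^ M :=
    mul_le_mul_of_nonneg_left (pow_le_pow_left₀ hbase0 hbase M) (Real.exp_pos _).le
  have step4 : Real.exp (-(t*s)) * Real.exp (δ*μ) ^ M ≤ Real.exp (-(δ^2*μ*M/3)) := by
    rw [← Real.exp_nat_mul, ← Real.exp_add, Real.exp_le_exp]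
    have hphi := phi_ineq hδ0.le hδ1
    have hμM : (0:ℝ) ≤ μ * M := mul_nonneg hμ0.le (Nat.cast_nonneg M)
    have hkey : 0 ≤ ((1+δ) * t - δ - δ^2/3) * (μ * M) :=
      mul_nonneg (by linarith) hμM
    rw [hs]
    nlinarith [hkey]
  calc (∑ C : Fin M → α, if s ≤ ∑ m, f (C m) then ∏ m, P (C m) else 0)
      ≤ ∑ C : Fin M → α, Real.exp (-(t*s)) * ∏ m, (P (C m) * Real.exp (t * f (C m))) := step1
    _ = Real.exp (-(t*s)) * (∑ a, P a * Real.exp (t * f a)) ^ M := step2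
    _ ≤ Real.exp (-(t*s)) * Real.exp (δ*μ) ^ M := step3
    _ ≤ Real.exp (-(δ^2*μ*M/3)) := step4

/-- **Union bound for the good set of codebooks, second-order version (Eq. (46)).**
Let `S̄` be the set of codebooks with `∑_{y^n} P_{C,2}(y^n) < μ_n(1 + 1/√n)` and
`D_{C,1}(y^n) < 1 + 1/√n` for all `y^n`.  Then
`ℙ(𝒞 ∉ S̄) ≤ e^{−(μ_n/(3n)) 2^{nR_n}} + |𝒴|^n e^{−(1/3) n^{c−r−1}}`. -/
theorem good_codebooks_union_bound_second_order
    {𝒳 𝒴 : Type*} [Fintype 𝒳] [Fintype 𝒴]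
    (QX : 𝒳 → ℝ) (QYX : 𝒳 → 𝒴 → ℝ) (hQX : IsPMF QX) (hQYX : ∀ x, IsPMF (QYX x))
    (Rn : ℝ) (n M : ℕ) (hn : 0 < n) (hM : (M : ℝ) = 2 ^ ((n : ℝ) * Rn))
    (εn : ℝ) (hεn : 0 < εn)
    (μn : ℝ) (hμn : μn ∈ Set.Ioc (0 : ℝ) 1) (hatyp : atypProb QX QYX n εn ≤ μn)
    (c r : ℝ) (hr : 0 < r) (hrc : r < c)
    (hgap : Rn - mutualInfo QX QYX - εn = (c - r) * Real.logb 2 ↑n / ↑n) :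
    cbProb QX n M (fun C =>
        ¬ ((∑ ys, Patyp QX QYX n M εn C ys) < μn * (1 + (Real.sqrt ↑n)⁻¹) ∧
          ∀ ys : Fin n → 𝒴, Dtyp QX QYX n M εn C ys < 1 + (Real.sqrt ↑n)⁻¹))
      ≤ Real.exp (-(μn / (3 * ↑n)) * 2 ^ ((n : ℝ) * Rn))
        + (Fintype.card 𝒴 : ℝ) ^ n * Real.exp (-(1 / 3) * (n : ℝ) ^ (c - r - 1)) := by
  classical
  obtain ⟨hQX0, hQX1⟩ := hQX
  have hn1 : (1:ℝ) ≤ (n:ℝ) := by exact_mod_cast hn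
  have hnR : (0:ℝ) < (n:ℝ) := by exact_mod_cast hn
  set δ : ℝ := (Real.sqrt (n:ℝ))⁻¹ with hδdef
  have hsq1 : (1:ℝ) ≤ Real.sqrt (n:ℝ) := by
    rw [show (1:ℝ) = Real.sqrt 1 from Real.sqrt_one.symm]
    exact Real.sqrt_le_sqrt hn1
  have hδ0 : 0 < δ := inv_pos.mpr (by linarith)
  have hδ1 : δ ≤ 1 := by
    rw [hδdef]
    exact inv_le_one_of_one_le₀ hsq1
  have hδsq : δ^2 = (n:ℝ)⁻¹ := by
    rw [hδdef, inv_pow, Real.sq_sqrt hnR.le]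
  have hM0 : (0:ℝ) < (M:ℝ) := by rw [hM]; positivity
  -- the product input distribution
  set P : (Fin n → 𝒳) → ℝ := prodDist QX n with hPdef
  have hP0 : ∀ xs, 0 ≤ P xs := fun xs => Finset.prod_nonneg fun i _ => hQX0 _
  have hP1 : ∑ xs, P xs = 1 := by
    rw [hPdef]
    unfold prodDist
    rw [sum_pi_prod (fun _ x => QX x)]
    simp [hQX1]
  have hchan0 : ∀ (xs : Fin n → 𝒳) (ys : Fin n → 𝒴), 0 ≤ chanProd QYX n xs ys :=
    fun xs ys => Finset.prod_nonneg fun i _ => (hQYX _).1 _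
  have hchan1 : ∀ xs : Fin n → 𝒳, ∑ ys, chanProd QYX n xs ys = 1 := by
    intro xs
    unfold chanProd
    rw [sum_pi_prod (fun i y => QYX (xs i) y)]
    simp [(hQYX _).2]
  have hqy0 : ∀ ys : Fin n → 𝒴, 0 ≤ prodDist (outDist QX QYX) n ys := by
    intro ys
    apply Finset.prod_nonneg
    intro i _
    exact Finset.sum_nonneg fun x _ => mul_nonneg (hQX0 x) ((hQYX x).1 _)
  have hmarg : ∀ ys : Fin n → 𝒴,
      ∑ xs, P xs * chanProd QYX n xs ys = prodDist (outDist QX QYX) n ys := by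
    intro ys
    have : ∀ xs : Fin n → 𝒳, P xs * chanProd QYX n xs ys
        = ∏ i, (QX (xs i) * QYX (xs i) (ys i)) := by
      intro xs
      rw [hPdef]
      unfold prodDist chanProd
      rw [Finset.prod_mul_distrib]
    simp_rw [this]
    rw [sum_pi_prod (fun i x => QX x * QYX x (ys i))]
    rfl
  -- f1 : atypical mass
  set f1 : (Fin n → 𝒳) → ℝ := fun xs =>
    ∑ ys, if ¬ JTypical QX QYX n εn xs ys then chanProd QYX n xs ys else 0 with hf1def
  have hf10 : ∀ xs, 0 ≤ f1 xs := by
    intro xs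
    apply Finset.sum_nonneg
    intro ys _
    split
    · exact hchan0 xs ys
    · exact le_refl 0
  have hE1sum : ∑ xs, P xs * f1 xs = atypProb QX QYX n εn := by
    unfold atypProb
    apply Finset.sum_congr rfl
    intro xs _
    simp only [hf1def]
    rw [Finset.mul_sum]
    apply Finset.sum_congr rfl
    intro ys _
    rw [mul_ite, mul_zero, hPdef]
  have hf11 : ∀ xs, f1 xs ≤ 1 := by
    intro xs
    rw [← hchan1 xs]
    simp only [hf1def]
    apply Finset.sum_le_sum
    intro ys _
    split
    · exact le_refl _
    · exact hchan0 xs ys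
  -- f2 : normalized typical density
  set b : ℝ := (2:ℝ) ^ ((n:ℝ) * (mutualInfo QX QYX + εn)) with hbdef
  have hb0 : (0:ℝ) < b := Real.rpow_pos_of_pos two_pos _
  set f2 : (Fin n → 𝒴) → (Fin n → 𝒳) → ℝ := fun ys xs =>
    (if JTypical QX QYX n εn xs ys then
      chanProd QYX n xs ys / prodDist (outDist QX QYX) n ys else 0) / b with hf2def
  have hf20 : ∀ ys xs, 0 ≤ f2 ys xs := by
    intro ys xs
    simp only [hf2def]
    apply div_nonneg _ hb0.le
    split
    · exact div_nonneg (hchan0 xs ys) (hqy0 ys)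
    · exact le_refl 0
  have hf21 : ∀ ys xs, f2 ys xs ≤ 1 := by
    intro ys xs
    simp only [hf2def]
    rw [div_le_one hb0]
    by_cases hJ : JTypical QX QYX n εn xs ys
    · rw [if_pos hJ]
      rcases le_or_gt (chanProd QYX n xs ys / prodDist (outDist QX QYX) n ys) 0 with h0 | h0
      · linarith
      · unfold JTypical at hJ
        have hlogb : Real.logb 2 (chanProd QYX n xs ys / prodDist (outDist QX QYX) n ys)
            ≤ (n:ℝ) * (mutualInfo QX QYX + εn) := (inv_mul_le_iff₀ hnR).mp hJ
        calc chanProd QYX n xs ys / prodDist (outDist QX QYX) n ys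
            = (2:ℝ) ^ Real.logb 2 (chanProd QYX n xs ys / prodDist (outDist QX QYX) n ys) :=
              (Real.rpow_logb two_pos (by norm_num) h0).symm
          _ ≤ b := by
              rw [hbdef]
              exact Real.rpow_le_rpow_of_exponent_le one_le_two hlogb
    · rw [if_neg hJ]
      exact hb0.le
  have hE2sum : ∀ ys : Fin n → 𝒴, ∑ xs, P xs * f2 ys xs ≤ b⁻¹ := by
    intro ys
    have h1 : ∑ xs, P xs * f2 ys xs = (∑ xs, P xs * (if JTypical QX QYX n εn xs ys then
        chanProd QYX n xs ys / prodDist (outDist QX QYX) n ys else 0)) / b := by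
      rw [Finset.sum_div]
      apply Finset.sum_congr rfl
      intro xs _
      simp only [hf2def]
      rw [mul_div_assoc]
    have h2 : ∑ xs, P xs * (if JTypical QX QYX n εn xs ys then
        chanProd QYX n xs ys / prodDist (outDist QX QYX) n ys else 0) ≤ 1 := by
      have h3 : ∑ xs, P xs * (if JTypical QX QYX n εn xs ys then
          chanProd QYX n xs ys / prodDist (outDist QX QYX) n ys else 0)
          ≤ ∑ xs, P xs * (chanProd QYX n xs ys / prodDist (outDist QX QYX) n ys) := by
        apply Finset.sum_le_sum
        intro xs _
        apply mul_le_mul_of_nonneg_left _ (hP0 xs)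
        split
        · exact le_refl _
        · exact div_nonneg (hchan0 xs ys) (hqy0 ys)
      have h4 : ∑ xs, P xs * (chanProd QYX n xs ys / prodDist (outDist QX QYX) n ys)
          = prodDist (outDist QX QYX) n ys / prodDist (outDist QX QYX) n ys := by
        rw [← hmarg ys, Finset.sum_div]
        apply Finset.sum_congr rfl
        intro xs _
        rw [mul_div_assoc]
      rw [h4] at h3
      have hle : prodDist (outDist QX QYX) n ys / prodDist (outDist QX QYX) n ys ≤ 1 := by
        rcases eq_or_ne (prodDist (outDist QX QYX) n ys) 0 with hz | hz
        · rw [hz, zero_div]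
          exact zero_le_one
        · rw [div_self hz]
      exact h3.trans hle
    rw [h1]
    rw [div_le_iff₀ hb0, inv_mul_cancel₀ hb0.ne']
    exact h2
  -- decomposition of the bad event
  have key : (cbProb QX n M fun C =>
        ¬ ((∑ ys, Patyp QX QYX n M εn C ys) < μn * (1 + δ) ∧
          ∀ ys : Fin n → 𝒴, Dtyp QX QYX n M εn C ys < 1 + δ))
      ≤ (∑ C : Fin M → Fin n → 𝒳,
            if (1+δ)*μn*(M:ℝ) ≤ ∑ m, f1 (C m) then ∏ m, P (C m) else 0)
        + ∑ ys : Fin n → 𝒴, ∑ C : Fin M → Fin n → 𝒳,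
            if (1+δ)*b⁻¹*(M:ℝ) ≤ ∑ m, f2 ys (C m) then ∏ m, P (C m) else 0 := by
    unfold cbProb
    rw [show (∑ ys : Fin n → 𝒴, ∑ C : Fin M → Fin n → 𝒳,
          if (1+δ)*b⁻¹*(M:ℝ) ≤ ∑ m, f2 ys (C m) then ∏ m, P (C m) else 0)
        = ∑ C : Fin M → Fin n → 𝒳, ∑ ys : Fin n → 𝒴,
          if (1+δ)*b⁻¹*(M:ℝ) ≤ ∑ m, f2 ys (C m) then ∏ m, P (C m) else 0 from
        Finset.sum_comm, ← Finset.sum_add_distrib]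
    apply Finset.sum_le_sum
    intro C _
    beta_reduce
    have hw0 : 0 ≤ ∏ m, P (C m) := Finset.prod_nonneg fun m _ => hP0 _
    have hterm2 : ∀ ys : Fin n → 𝒴, 0 ≤ (if (1+δ)*b⁻¹*(M:ℝ) ≤ ∑ m, f2 ys (C m)
        then ∏ m, P (C m) else 0) := by
      intro ys
      split
      · exact hw0
      · exact le_refl 0
    have hterm1 : 0 ≤ (if (1+δ)*μn*(M:ℝ) ≤ ∑ m, f1 (C m) then ∏ m, P (C m) else 0) := by
      split
      · exact hw0
      · exact le_refl 0
    rw [← hPdef]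
    by_cases hE : ¬ ((∑ ys, Patyp QX QYX n M εn C ys) < μn * (1 + δ) ∧
          ∀ ys : Fin n → 𝒴, Dtyp QX QYX n M εn C ys < 1 + δ)
    · rw [if_pos hE]
      rw [not_and_or] at hE
      rcases hE with hA | hB
      · have hA' : μn * (1+δ) ≤ ∑ ys, Patyp QX QYX n M εn C ys := not_lt.mp hA
        have hPat : ∑ ys, Patyp QX QYX n M εn C ys = (M:ℝ)⁻¹ * ∑ m, f1 (C m) := by
          unfold Patyp
          rw [← Finset.mul_sum, Finset.sum_comm]
        have hcond : (1+δ)*μn*(M:ℝ) ≤ ∑ m, f1 (C m) := by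
          rw [hPat, inv_mul_eq_div, le_div_iff₀ hM0] at hA'
          nlinarith [hA']
        rw [if_pos hcond]
        have := Finset.sum_nonneg (fun ys (_ : ys ∈ Finset.univ) => hterm2 ys)
        linarith
      · push_neg at hB
        obtain ⟨ys0, hys0⟩ := hB
        have hDt : Dtyp QX QYX n M εn C ys0 = (M:ℝ)⁻¹ * (b * ∑ m, f2 ys0 (C m)) := by
          unfold Dtyp
          congr 1
          rw [Finset.mul_sum]
          apply Finset.sum_congr rfl
          intro m _
          simp only [hf2def]
          rw [mul_comm b, div_mul_cancel₀ _ hb0.ne']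
        have hcond : (1+δ)*b⁻¹*(M:ℝ) ≤ ∑ m, f2 ys0 (C m) := by
          rw [hDt, inv_mul_eq_div, le_div_iff₀ hM0] at hys0
          rw [show (1+δ)*b⁻¹*(M:ℝ) = ((1+δ)*(M:ℝ))/b by ring, div_le_iff₀ hb0]
          linarith [hys0]
        have hsingle : (if (1+δ)*b⁻¹*(M:ℝ) ≤ ∑ m, f2 ys0 (C m) then
            ∏ m, P (C m) else 0) ≤ ∑ ys : Fin n → 𝒴,
            (if (1+δ)*b⁻¹*(M:ℝ) ≤ ∑ m, f2 ys (C m) then ∏ m, P (C m) else 0) :=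
          Finset.single_le_sum (fun ys (_ : ys ∈ Finset.univ) => hterm2 ys) (Finset.mem_univ ys0)
        rw [if_pos hcond] at hsingle
        linarith [hterm1, hsingle]
    · rw [if_neg hE]
      have := Finset.sum_nonneg (fun ys (_ : ys ∈ Finset.univ) => hterm2 ys)
      linarith [hterm1]
  -- Chernoff applications
  have hch1 := chernoff P hP0 hP1 M f1 hf10 hf11 μn hμn.1 (by rw [hE1sum]; exact hatyp) δ hδ0 hδ1
  have hch2 : ∀ ys : Fin n → 𝒴, (∑ C : Fin M → Fin n → 𝒳,
      if (1+δ)*b⁻¹*(M:ℝ) ≤ ∑ m, f2 ys (C m) then ∏ m, P (C m) else 0)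
      ≤ Real.exp (-(δ^2*b⁻¹*(M:ℝ)/3)) := fun ys =>
    chernoff P hP0 hP1 M (f2 ys) (hf20 ys) (hf21 ys) b⁻¹ (inv_pos.mpr hb0) (hE2sum ys) δ hδ0 hδ1
  -- exponent identities
  have e1 : -(δ^2*μn*(M:ℝ)/3) = -(μn / (3 * (n:ℝ))) * 2 ^ ((n : ℝ) * Rn) := by
    rw [hδsq, hM]
    ring
  have hng : (n:ℝ) * (Rn - mutualInfo QX QYX - εn) = (c-r) * Real.logb 2 (n:ℝ) := by
    rw [hgap]
    field_simp
  have hbM : b⁻¹ * (M:ℝ) = (n:ℝ) ^ (c - r) := by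
    rw [hM, hbdef, ← Real.rpow_neg (by norm_num : (0:ℝ) ≤ 2),
      ← Real.rpow_add two_pos]
    have hlg : -((n:ℝ) * (mutualInfo QX QYX + εn)) + (n:ℝ)*Rn = (c - r) * Real.logb 2 (n:ℝ) := by
      rw [← hng]
      ring
    rw [hlg, mul_comm (c-r), Real.rpow_mul (by norm_num : (0:ℝ) ≤ 2),
      Real.rpow_logb two_pos (by norm_num) hnR]
  have e2 : -(δ^2*b⁻¹*(M:ℝ)/3) = -(1/3) * (n:ℝ) ^ (c - r - 1) := by
    rw [hδsq]
    have h5 : (n:ℝ)⁻¹ * b⁻¹ * (M:ℝ) = (n:ℝ) ^ (c - r - 1) := by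
      rw [mul_assoc, hbM, ← Real.rpow_neg_one (n:ℝ), ← Real.rpow_add hnR]
      congr 1
      ring
    rw [show (n:ℝ)⁻¹*b⁻¹*(M:ℝ)/3 = ((n:ℝ)⁻¹*b⁻¹*(M:ℝ))/3 from rfl, h5]
    ring
  -- finish
  calc (cbProb QX n M fun C =>
        ¬ ((∑ ys, Patyp QX QYX n M εn C ys) < μn * (1 + δ) ∧
          ∀ ys : Fin n → 𝒴, Dtyp QX QYX n M εn C ys < 1 + δ))
      ≤ (∑ C : Fin M → Fin n → 𝒳,
            if (1+δ)*μn*(M:ℝ) ≤ ∑ m, f1 (C m) then ∏ m, P (C m) else 0)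
        + ∑ ys : Fin n → 𝒴, ∑ C : Fin M → Fin n → 𝒳,
            if (1+δ)*b⁻¹*(M:ℝ) ≤ ∑ m, f2 ys (C m) then ∏ m, P (C m) else 0 := key
    _ ≤ Real.exp (-(δ^2*μn*(M:ℝ)/3)) + ∑ ys : Fin n → 𝒴, Real.exp (-(δ^2*b⁻¹*(M:ℝ)/3)) := by
        apply add_le_add hch1
        exact Finset.sum_le_sum fun ys _ => hch2 ys
    _ = Real.exp (-(μn / (3 * (n:ℝ))) * 2 ^ ((n : ℝ) * Rn))
        + (Fintype.card 𝒴 : ℝ) ^ n * Real.exp (-(1 / 3) * (n:ℝ) ^ (c - r - 1)) := by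
        rw [e1, e2, Finset.sum_const, Finset.card_univ, nsmul_eq_mul]
        congr 2
        rw [Fintype.card_fun, Fintype.card_fin]
        push_cast
        rfl
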